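/- arXiv:1102.2247 — 2 statements merged into one kernel-verified Lean document; each statement's English description precedes it below -/
import Mathlib

section
/- For a Thurston map f with postcritical set P_f, the orbifold Euler characteristic χ(S²,N_f) = 2 − Σ_{x∈P_f}(1 − 1/N_f(x)) satisfies χ(S²,N_f) ≤ 0. -/
/-- `orbInv m` is `1/m` with the convention `1/∞ = 0`. -/
noncomputable def orbInv (m : ℕ∞) : ℝ := ((m : ENNReal)⁻¹).toReal

lemma orbInv_nonneg (m : ℕ∞) : 0 ≤ orbInv m := ENNReal.toReal_nonneg

lemma orbInv_one : orbInv 1 = 1 := by simp [orbInv]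

lemma orbInv_key (k : ℕ) (hk : 1 ≤ k) (a b : ℕ∞) (ha : 1 ≤ a) (hb : 1 ≤ b)
    (h : (k:ℕ∞) * a ∣ b) : (k:ℝ) * orbInv b ≤ orbInv a := by
  obtain ⟨c, hc⟩ := h
  have hc0 : (1:ℕ∞) ≤ c := by
    rw [ENat.one_le_iff_ne_zero]
    rintro rfl
    rw [mul_zero] at hc
    subst hc; simp at hb
  have hle : (k:ℕ∞) * a ≤ b := by
    rw [hc]; exact le_mul_of_one_le_right' hc0
  have hle' : (k:ENNReal) * (a:ENNReal) ≤ (b:ENNReal) := by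
    calc (k:ENNReal) * (a:ENNReal) = (((k:ℕ∞) * a : ℕ∞) : ENNReal) := by push_cast; ring
    _ ≤ (b:ENNReal) := by exact_mod_cast hle
  have hk0 : (k:ENNReal) ≠ 0 := by exact_mod_cast Nat.pos_of_ne_zero (by omega) |>.ne'
  have hkt : (k:ENNReal) ≠ ⊤ := by simp
  have ha0 : (a:ENNReal) ≠ 0 := by
    intro h0
    have : a = 0 := by exact_mod_cast h0
    subst this; simp at ha
  have hinv : (k:ENNReal) * (b:ENNReal)⁻¹ ≤ (a:ENNReal)⁻¹ := by
    have h1 : (b:ENNReal)⁻¹ ≤ ((k:ENNReal) * (a:ENNReal))⁻¹ := ENNReal.inv_le_inv.mpr hle'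
    rw [ENNReal.mul_inv (Or.inl hk0) (Or.inl hkt)] at h1
    calc (k:ENNReal) * (b:ENNReal)⁻¹ ≤ (k:ENNReal) * ((k:ENNReal)⁻¹ * (a:ENNReal)⁻¹) :=
          mul_le_mul_right h1 _
      _ = ((k:ENNReal) * (k:ENNReal)⁻¹) * (a:ENNReal)⁻¹ := by ring
      _ = (a:ENNReal)⁻¹ := by rw [ENNReal.mul_inv_cancel hk0 hkt, one_mul]
  have hafin : (a:ENNReal)⁻¹ ≠ ⊤ := ENNReal.inv_ne_top.mpr ha0
  calc (k:ℝ) * orbInv b = ((k:ENNReal) * (b:ENNReal)⁻¹).toReal := by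
        rw [ENNReal.toReal_mul]; simp [orbInv]
    _ ≤ ((a:ENNReal)⁻¹).toReal := ENNReal.toReal_mono hafin hinv
    _ = orbInv a := rfl

/-- for a Thurston map `f` (an orientation-preserving branched
self-covering of `S²` of degree `d ≥ 2` with finite postcritical set `P`),
the orbifold Euler characteristic
`χ(S², N_f) = 2 - Σ_{x ∈ P} (1 - 1/N_f(x))` is nonpositive.

The branched-covering structure is encoded combinatorially:
`locdeg x` is the local degree of `f` at `x`, `Ω` the critical set,
`hRH` is the Riemann–Hurwitz relation, `hdeg` says local degrees over each
fiber sum to `d`, `P` is the postcritical set `⋃_{n ≥ 1} f^n(Ω)`, and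
`N : X → ℕ∞` is the orbifold multiplicity function of `f`:
`N ≡ 1` off `P`, each `N x ≥ 1`, and `deg_x(f)·N(x)` divides `N(f(x))`
(the defining property of `N_f` as the lcm of local degrees of iterates,
with value `∞` on cycles containing a critical point). -/
theorem orbifold_euler_char_nonpos {X : Type*} (f : X → X) (d : ℕ) (hd : 2 ≤ d)
    (locdeg : X → ℕ) (hloc : ∀ x, 1 ≤ locdeg x)
    (Ω : Finset X) (hΩ : ∀ x, x ∈ Ω ↔ 2 ≤ locdeg x)
    (hRH : ∑ x ∈ Ω, (locdeg x - 1) = 2 * d - 2)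
    (fiber : X → Finset X) (hfiber : ∀ y x, x ∈ fiber y ↔ f x = y)
    (hdeg : ∀ y, ∑ x ∈ fiber y, locdeg x = d)
    (P : Finset X)
    (hP : ∀ x, x ∈ P ↔ ∃ c ∈ Ω, ∃ n : ℕ, 1 ≤ n ∧ f^[n] c = x)
    (N : X → ℕ∞)
    (hN1 : ∀ x, x ∉ P → N x = 1)
    (hNpos : ∀ x, 1 ≤ N x)
    (hNinf : ∀ x ∈ P, (∃ n : ℕ, 1 ≤ n ∧ f^[n] x = x ∧ ∃ k ≤ n, f^[k] x ∈ Ω) →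
      N x = ⊤)
    (hcomp : ∀ x, (locdeg x : ℕ∞) * N x ∣ N (f x)) :
    2 - ∑ x ∈ P, (1 - orbInv (N x)) ≤ 0 := by
  classical
  set S := ∑ x ∈ P, (1 - orbInv (N x)) with hS
  have hkey : ∀ x, (locdeg x : ℝ) * orbInv (N (f x)) ≤ orbInv (N x) := fun x =>
    orbInv_key (locdeg x) (hloc x) (N x) (N (f x)) (hNpos x) (hNpos (f x)) (hcomp x)
  have hPinv : ∀ x ∈ P, f x ∈ P := by
    intro x hx
    obtain ⟨c, hc, n, hn, hfc⟩ := (hP x).mp hx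
    refine (hP (f x)).mpr ⟨c, hc, n + 1, by omega, ?_⟩
    rw [Function.iterate_succ_apply', hfc]
  have hΩP : ∀ c ∈ Ω, f c ∈ P := fun c hc =>
    (hP (f c)).mpr ⟨c, hc, 1, le_refl 1, by simp⟩
  set B := P.biUnion fiber with hB
  have hdisj : (P : Set X).PairwiseDisjoint fiber := by
    intro y₁ _ y₂ _ hne
    rw [Function.onFun, Finset.disjoint_left]
    intro x hx1 hx2
    exact hne (((hfiber y₁ x).mp hx1).symm.trans ((hfiber y₂ x).mp hx2))
  have hsumB : ∀ g : X → ℝ, ∑ x ∈ B, g x = ∑ y ∈ P, ∑ x ∈ fiber y, g x := fun g =>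
    Finset.sum_biUnion hdisj
  have hPB : P ⊆ B := by
    intro x hx
    exact Finset.mem_biUnion.mpr ⟨f x, hPinv x hx, (hfiber (f x) x).mpr rfl⟩
  have hΩB : Ω ⊆ B := by
    intro c hc
    exact Finset.mem_biUnion.mpr ⟨f c, hΩP c hc, (hfiber (f c) c).mpr rfl⟩
  have h1 : ∑ x ∈ B, (locdeg x : ℝ) * (1 - orbInv (N (f x))) = d * S := by
    rw [hsumB]
    have : ∀ y ∈ P, ∑ x ∈ fiber y, (locdeg x : ℝ) * (1 - orbInv (N (f x)))
        = d * (1 - orbInv (N y)) := by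
      intro y hy
      have : ∀ x ∈ fiber y, (locdeg x : ℝ) * (1 - orbInv (N (f x)))
          = (locdeg x : ℝ) * (1 - orbInv (N y)) := by
        intro x hx
        rw [(hfiber y x).mp hx]
      rw [Finset.sum_congr rfl this, ← Finset.sum_mul]
      congr 1
      exact_mod_cast congrArg (Nat.cast : ℕ → ℝ) (hdeg y)
    rw [Finset.sum_congr rfl this, ← Finset.mul_sum]
  have h2 : S = ∑ x ∈ B, (1 - orbInv (N x)) := by
    refine Finset.sum_subset hPB ?_
    intro x _ hx
    rw [hN1 x hx, orbInv_one]
    ring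
  have h3 : ∑ x ∈ B, ((locdeg x : ℝ) - 1) = 2 * d - 2 := by
    rw [← Finset.sum_subset hΩB (by
      intro x _ hx
      have : locdeg x = 1 := by
        have := hloc x
        have h2' := (hΩ x).not.mp hx  -- ¬ 2 ≤ locdeg x
        omega
      rw [this]; simp)]
    have : ∀ x ∈ Ω, (locdeg x : ℝ) - 1 = ((locdeg x - 1 : ℕ) : ℝ) := by
      intro x _
      rw [Nat.cast_sub (hloc x), Nat.cast_one]
    rw [Finset.sum_congr rfl this, ← Nat.cast_sum, hRH,
      Nat.cast_sub (by omega), Nat.cast_mul]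
    norm_num
  have h4 : ∑ x ∈ B, ((1 - orbInv (N x)) + ((locdeg x : ℝ) - 1))
      ≤ ∑ x ∈ B, (locdeg x : ℝ) * (1 - orbInv (N (f x))) := by
    refine Finset.sum_le_sum ?_
    intro x _
    have hk := hkey x
    nlinarith [hk]
  rw [Finset.sum_add_distrib, ← h2, h3, h1] at h4
  have hd2 : (2:ℝ) ≤ (d:ℝ) := by exact_mod_cast hd
  nlinarith [h4, hd2]
end

section
/- Every square matrix with nonnegative real entries has a real nonnegative eigenvalue λ equal to its spectral radius (the Perron–Frobenius leading eigenvalue). -/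
set_option maxHeartbeats 1000000

open Filter Finset
open scoped NNReal ENNReal Topology

namespace PerronAux

attribute [local instance] Matrix.linftyOpNormedAddCommGroup Matrix.linftyOpNormedSpace
  Matrix.linftyOpNormedRing Matrix.linftyOpNormedAlgebra

variable {n : ℕ}

local instance : CompleteSpace (Matrix (Fin n) (Fin n) ℂ) := FiniteDimensional.complete ℂ _

lemma entry_nnnorm_le (X : Matrix (Fin n) (Fin n) ℂ) (i j : Fin n) : ‖X i j‖₊ ≤ ‖X‖₊ := by
  rw [Matrix.linfty_opNNNorm_def]
  exact le_trans
    (Finset.single_le_sum (f := fun j' => ‖X i j'‖₊) (fun _ _ => zero_le) (mem_univ j))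
    (Finset.le_sup (f := fun i => ∑ j : Fin n, ‖X i j‖₊) (mem_univ i))

lemma entry_norm_le (X : Matrix (Fin n) (Fin n) ℂ) (i j : Fin n) : ‖X i j‖ ≤ ‖X‖ :=
  entry_nnnorm_le X i j

lemma norm_le_norm_of_entry_le {X Y : Matrix (Fin n) (Fin n) ℂ}
    (h : ∀ i j, ‖X i j‖ ≤ ‖Y i j‖) : ‖X‖ ≤ ‖Y‖ := by
  have h' : ∀ i j, ‖X i j‖₊ ≤ ‖Y i j‖₊ := fun i j => h i j
  rw [Matrix.linfty_opNorm_def, Matrix.linfty_opNorm_def]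
  exact NNReal.coe_le_coe.mpr
    (Finset.sup_mono_fun fun i _ => Finset.sum_le_sum fun j _ => h' i j)

/-- The entry evaluation as a continuous linear map. -/
noncomputable def entryCLM (i j : Fin n) : Matrix (Fin n) (Fin n) ℂ →L[ℂ] ℂ :=
  LinearMap.mkContinuous
    { toFun := fun X => X i j
      map_add' := fun _ _ => rfl
      map_smul' := fun _ _ => rfl }
    1 (fun X => by rw [one_mul]; exact entry_norm_le X i j)

@[simp] lemma entryCLM_apply (i j : Fin n) (X : Matrix (Fin n) (Fin n) ℂ) :
    entryCLM i j X = X i j := rfl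

lemma summable_aux {A : Matrix (Fin n) (Fin n) ℂ} {t : ℝ}
    (hfin : spectralRadius ℂ A ≠ ⊤) (ht : (spectralRadius ℂ A).toReal < t) :
    Summable fun k : ℕ => ‖A ^ k‖ * t⁻¹ ^ k := by
  set ρ := (spectralRadius ℂ A).toReal with hρ
  have hρ0 : 0 ≤ ρ := ENNReal.toReal_nonneg
  have ht0 : 0 < t := lt_of_le_of_lt hρ0 ht
  set c := (ρ + t) / 2 with hc
  have hρc : ρ < c := by rw [hc]; linarith
  have hct : c < t := by rw [hc]; linarith
  have hc0 : 0 < c := lt_of_le_of_lt hρ0 hρc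
  have TR := spectrum.pow_nnnorm_pow_one_div_tendsto_nhds_spectralRadius A
  have TR' : Tendsto (fun k : ℕ => ‖A ^ k‖ ^ (1 / (k : ℝ))) atTop (𝓝 ρ) := by
    have h := (ENNReal.tendsto_toReal hfin).comp TR
    convert h using 2 with k
    rw [Function.comp_apply, ← ENNReal.toReal_rpow, ENNReal.coe_toReal, coe_nnnorm]
  have hev : ∀ᶠ k : ℕ in atTop, ‖A ^ k‖ ^ (1 / (k : ℝ)) < c := TR'.eventually_lt_const hρc
  refine Summable.of_norm_bounded_eventually_nat (g := fun k => (c / t) ^ k)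
    (summable_geometric_of_lt_one (by positivity) (by rw [div_lt_one ht0]; exact hct)) ?_
  filter_upwards [hev, eventually_ge_atTop 1] with k hk hk1
  have hk0 : (k : ℕ) ≠ 0 := by omega
  have hAk : ‖A ^ k‖ ≤ c ^ k := by
    have h2 := Real.rpow_inv_natCast_pow (norm_nonneg (A ^ k)) hk0
    calc ‖A ^ k‖ = (‖A ^ k‖ ^ ((k : ℝ)⁻¹)) ^ k := h2.symm
      _ ≤ c ^ k := by
          refine pow_le_pow_left₀ (Real.rpow_nonneg (norm_nonneg _) _) ?_ k
          rw [← one_div]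
          exact hk.le
  have h1 : 0 ≤ ‖A ^ k‖ * t⁻¹ ^ k := by positivity
  rw [Real.norm_of_nonneg h1, div_pow, div_eq_mul_inv, ← inv_pow]
  exact mul_le_mul_of_nonneg_right hAk (by positivity)

lemma geom_inverse (A : Matrix (Fin n) (Fin n) ℂ) {z : ℂ} (hz : z ≠ 0)
    (hsum : Summable fun k : ℕ => (z⁻¹) ^ k • A ^ k) :
    (z • (1 : Matrix (Fin n) (Fin n) ℂ) - A) * (z⁻¹ • ∑' k : ℕ, (z⁻¹) ^ k • A ^ k) = 1 ∧
      (z⁻¹ • ∑' k : ℕ, (z⁻¹) ^ k • A ^ k) * (z • (1 : Matrix (Fin n) (Fin n) ℂ) - A) = 1 ∧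
      A * (∑' k : ℕ, (z⁻¹) ^ k • A ^ k) = (∑' k : ℕ, (z⁻¹) ^ k • A ^ k) * A := by
  set f : ℕ → Matrix (Fin n) (Fin n) ℂ := fun k => (z⁻¹) ^ k • A ^ k with hf
  set T := ∑' k, f k with hT
  have hTs : HasSum f T := hsum.hasSum
  have hxf : ∀ k, (z⁻¹ • A) * f k = f (k + 1) := by
    intro k
    show (z⁻¹ • A) * ((z⁻¹) ^ k • A ^ k) = (z⁻¹) ^ (k + 1) • A ^ (k + 1)
    rw [smul_mul_smul_comm, ← pow_succ', ← pow_succ']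
  have hfx : ∀ k, f k * (z⁻¹ • A) = f (k + 1) := by
    intro k
    show ((z⁻¹) ^ k • A ^ k) * (z⁻¹ • A) = (z⁻¹) ^ (k + 1) • A ^ (k + 1)
    rw [smul_mul_smul_comm, ← pow_succ, ← pow_succ]
  have hAf : ∀ k, A * f k = f k * A := by
    intro k
    show A * ((z⁻¹) ^ k • A ^ k) = ((z⁻¹) ^ k • A ^ k) * A
    rw [mul_smul_comm, smul_mul_assoc, ← pow_succ, ← pow_succ']
  have hf0 : f 0 = 1 := by simp [hf]
  have key1 : T = (z⁻¹ • A) * T + 1 := by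
    have h1 : HasSum (fun k => f (k + 1)) ((z⁻¹ • A) * T) := by
      simpa only [hxf] using hTs.mul_left (z⁻¹ • A)
    have h1' := (hasSum_nat_add_iff (f := f) 1).mp h1
    simpa [hf0] using hTs.unique h1'
  have key2 : T = T * (z⁻¹ • A) + 1 := by
    have h1 : HasSum (fun k => f (k + 1)) (T * (z⁻¹ • A)) := by
      simpa only [hfx] using hTs.mul_right (z⁻¹ • A)
    have h1' := (hasSum_nat_add_iff (f := f) 1).mp h1
    simpa [hf0] using hTs.unique h1'
  have e1 : ((1 : Matrix (Fin n) (Fin n) ℂ) - z⁻¹ • A) * T = 1 := by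
    rw [sub_mul, one_mul]
    exact sub_eq_of_eq_add' key1
  have e2 : T * ((1 : Matrix (Fin n) (Fin n) ℂ) - z⁻¹ • A) = 1 := by
    rw [mul_sub, mul_one]
    exact sub_eq_of_eq_add' key2
  have hsm : z • ((1 : Matrix (Fin n) (Fin n) ℂ) - z⁻¹ • A) = z • 1 - A := by
    rw [smul_sub, smul_smul, mul_inv_cancel₀ hz, one_smul]
  refine ⟨?_, ?_, ?_⟩
  · rw [← hsm, smul_mul_smul_comm, mul_inv_cancel₀ hz, e1, one_smul]
  · rw [← hsm, smul_mul_smul_comm, inv_mul_cancel₀ hz, e2, one_smul]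
  · refine HasSum.unique ?_ (hTs.mul_right A)
    simpa only [hAf] using hTs.mul_left A

lemma crux (A : Matrix (Fin n) (Fin n) ℂ)
    (hpos : ∀ (k : ℕ) (i j : Fin n), ∃ r : ℝ, 0 ≤ r ∧ (A ^ k) i j = (r : ℂ))
    {μ : ℂ} (hμ : μ ∈ spectrum ℂ A)
    (hmax : ∀ ν ∈ spectrum ℂ A, ‖ν‖ ≤ ‖μ‖) :
    ((‖μ‖ : ℝ) : ℂ) ∈ spectrum ℂ A := by
  set ρ := ‖μ‖ with hρdef
  by_contra hcon
  have hρpos : 0 < ρ := by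
    rcases lt_or_eq_of_le (norm_nonneg μ) with h | h
    · exact h
    · exfalso
      have hμ0 : μ = 0 := norm_eq_zero.mp h.symm
      apply hcon
      have : ρ = 0 := h.symm
      rw [this]
      simpa [hμ0] using hμ
  have hsr : spectralRadius ℂ A = (‖μ‖₊ : ℝ≥0∞) := by
    refine le_antisymm ?_ ?_
    · refine iSup₂_le fun ν hν => ?_
      have h2 : ‖ν‖₊ ≤ ‖μ‖₊ := by
        have h5 := hmax ν hν
        rw [hρdef] at h5
        rwa [← coe_nnnorm, ← coe_nnnorm, NNReal.coe_le_coe] at h5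
      exact_mod_cast h2
    · exact le_iSup₂ (f := fun k (_ : k ∈ spectrum ℂ A) => (‖k‖₊ : ℝ≥0∞)) μ hμ
  have hfin : spectralRadius ℂ A ≠ ⊤ := by rw [hsr]; exact ENNReal.coe_ne_top
  have hsrρ : (spectralRadius ℂ A).toReal = ρ := by
    rw [hsr, ENNReal.coe_toReal, coe_nnnorm]
  have hunit : IsUnit ((ρ : ℂ) • (1 : Matrix (Fin n) (Fin n) ℂ) - A) := by
    have := spectrum.notMem_iff.mp hcon
    rwa [Algebra.algebraMap_eq_smul_one] at this
  set g : ℝ → Matrix (Fin n) (Fin n) ℂ :=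
    fun t => Ring.inverse (((t : ℝ) : ℂ) • (1 : Matrix (Fin n) (Fin n) ℂ) - A) with hg
  have hgc : ContinuousAt g ρ := by
    have hcont : Continuous fun t : ℝ => ((t : ℂ) • (1 : Matrix (Fin n) (Fin n) ℂ) - A) :=
      (Complex.continuous_ofReal.smul continuous_const).sub continuous_const
    have h2 : ContinuousAt Ring.inverse
        ((ρ : ℂ) • (1 : Matrix (Fin n) (Fin n) ℂ) - A) := by
      have := NormedRing.inverse_continuousAt hunit.unit
      rwa [IsUnit.unit_spec] at this
    have h3 : ContinuousAt
        (Ring.inverse ∘ fun t : ℝ => ((t : ℂ) • (1 : Matrix (Fin n) (Fin n) ℂ) - A)) ρ :=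
      ContinuousAt.comp h2 hcont.continuousAt
    exact h3
  set C := ‖g ρ‖ + 1 with hC
  have hC1 : 1 ≤ C := by
    have := norm_nonneg (g ρ); rw [hC]; linarith
  have hev : ∀ᶠ t in 𝓝 ρ, ‖g t‖ < C := by
    have h1 : Tendsto (fun t => ‖g t‖) (𝓝 ρ) (𝓝 ‖g ρ‖) := hgc.norm
    exact h1.eventually_lt_const (by rw [hC]; linarith)
  obtain ⟨δ, hδ0, hδ⟩ := Metric.eventually_nhds_iff.mp hev
  set ε := min (δ / 2) (1 / (2 * C)) with hε
  have hC0 : (0:ℝ) < C := by linarith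
  have hε0 : 0 < ε := lt_min (by linarith) (by positivity)
  set t := ρ + ε with ht
  have htρ : ρ < t := by rw [ht]; linarith
  have ht0 : 0 < t := lt_trans hρpos htρ
  have hdist : dist t ρ < δ := by
    rw [Real.dist_eq, ht, add_sub_cancel_left, abs_of_pos hε0]
    calc ε ≤ δ / 2 := min_le_left _ _
      _ < δ := by linarith
  have hgtC : ‖g t‖ < C := hδ hdist
  have SR : Summable fun k : ℕ => ‖A ^ k‖ * t⁻¹ ^ k :=
    summable_aux hfin (by rw [hsrρ]; exact htρ)
  have hzsum : ∀ z : ℂ, ‖z‖ = t → Summable fun k : ℕ => (z⁻¹) ^ k • A ^ k := by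
    intro z hzn
    apply Summable.of_norm
    have heq : (fun k : ℕ => ‖(z⁻¹) ^ k • A ^ k‖) = fun k => ‖A ^ k‖ * t⁻¹ ^ k := by
      funext k
      rw [norm_smul, norm_pow, norm_inv, hzn, mul_comm]
    rw [heq]
    exact SR
  have hz1n : ‖((t : ℝ) : ℂ)‖ = t := by
    rw [Complex.norm_real, Real.norm_of_nonneg ht0.le]
  set z2 : ℂ := (((t / ρ : ℝ)) : ℂ) * μ with hz2
  have htρ0 : (0:ℝ) ≤ t / ρ := by positivity
  have hz2n : ‖z2‖ = t := by
    rw [hz2, norm_mul, Complex.norm_real, Real.norm_of_nonneg htρ0, ← hρdef,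
      div_mul_cancel₀ _ (ne_of_gt hρpos)]
  have hz1ne : ((t : ℝ) : ℂ) ≠ 0 := by
    simpa using ne_of_gt ht0
  have hz2ne : z2 ≠ 0 := by
    intro h
    rw [h, norm_zero] at hz2n
    exact ne_of_gt ht0 hz2n.symm
  set T1 := ∑' k : ℕ, ((((t : ℝ) : ℂ))⁻¹) ^ k • A ^ k with hT1
  set T2 := ∑' k : ℕ, (z2⁻¹) ^ k • A ^ k with hT2
  have hsum1 := hzsum _ hz1n
  have hsum2 := hzsum _ hz2n
  obtain ⟨p1a, p1b, _⟩ := geom_inverse A hz1ne hsum1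
  obtain ⟨p2a, p2b, p2c⟩ := geom_inverse A hz2ne hsum2
  have hgt : g t = (((t : ℝ) : ℂ))⁻¹ • T1 := by
    rw [hg]
    exact Ring.inverse_unit ⟨_, (((t : ℝ) : ℂ))⁻¹ • T1, p1a, p1b⟩
  have hentry : ∀ i j, ‖T2 i j‖ ≤ ‖T1 i j‖ := by
    intro i j
    choose r hr0 hrE using fun k => hpos k i j
    set q : ℕ → ℝ := fun k => t⁻¹ ^ k * r k with hq
    have hq0 : ∀ k, 0 ≤ q k := fun k => mul_nonneg (by positivity) (hr0 k)
    have hqs : Summable q := by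
      refine Summable.of_nonneg_of_le hq0 (fun k => ?_) SR
      have h3 : r k ≤ ‖A ^ k‖ := by
        have h1 : ‖(A ^ k) i j‖ ≤ ‖A ^ k‖ := entry_norm_le _ i j
        rwa [hrE k, Complex.norm_real, Real.norm_of_nonneg (hr0 k)] at h1
      calc q k = r k * t⁻¹ ^ k := mul_comm _ _
        _ ≤ ‖A ^ k‖ * t⁻¹ ^ k := mul_le_mul_of_nonneg_right h3 (by positivity)
    have hterm2 : ∀ k : ℕ, ‖(z2⁻¹) ^ k * (A ^ k) i j‖ = q k := by
      intro k
      rw [norm_mul, norm_pow, norm_inv, hz2n, hrE k, Complex.norm_real,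
        Real.norm_of_nonneg (hr0 k)]
    have hterm1 : ∀ k : ℕ, ((((t : ℝ) : ℂ))⁻¹) ^ k * (A ^ k) i j = ((q k : ℝ) : ℂ) := by
      intro k
      rw [hrE k, hq]
      push_cast
      ring
    have h1e : HasSum (fun k : ℕ => ((((t : ℝ) : ℂ))⁻¹) ^ k * (A ^ k) i j) (T1 i j) := by
      have h := (entryCLM i j).hasSum hsum1.hasSum
      simp only [entryCLM_apply, Matrix.smul_apply, smul_eq_mul] at h
      exact h
    have h2e : HasSum (fun k : ℕ => (z2⁻¹) ^ k * (A ^ k) i j) (T2 i j) := by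
      have h := (entryCLM i j).hasSum hsum2.hasSum
      simp only [entryCLM_apply, Matrix.smul_apply, smul_eq_mul] at h
      exact h
    have hT1e : T1 i j = ((∑' k, q k : ℝ) : ℂ) := by
      have h1e' : HasSum (fun k : ℕ => ((q k : ℝ) : ℂ)) (T1 i j) := by
        simpa only [hterm1] using h1e
      exact h1e'.unique (Complex.hasSum_ofReal.mpr hqs.hasSum)
    have h2norm : ‖T2 i j‖ ≤ ∑' k, q k := by
      have hsn : Summable fun k : ℕ => ‖(z2⁻¹) ^ k * (A ^ k) i j‖ := by
        simpa only [hterm2] using hqs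
      calc ‖T2 i j‖ = ‖∑' k, (z2⁻¹) ^ k * (A ^ k) i j‖ := by rw [h2e.tsum_eq]
        _ ≤ ∑' k, ‖(z2⁻¹) ^ k * (A ^ k) i j‖ := norm_tsum_le_tsum_norm hsn
        _ = ∑' k, q k := tsum_congr hterm2
    rw [hT1e, Complex.norm_real, Real.norm_of_nonneg (tsum_nonneg hq0)]
    exact h2norm
  have hTle : ‖T2‖ ≤ ‖T1‖ := norm_le_norm_of_entry_le hentry
  set S := z2⁻¹ • T2 with hS
  have hSnorm : ‖S‖ < C := by
    have h1 : ‖S‖ = t⁻¹ * ‖T2‖ := by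
      rw [hS, norm_smul, norm_inv, hz2n]
    have h2 : ‖g t‖ = t⁻¹ * ‖T1‖ := by
      rw [hgt, norm_smul, norm_inv, hz1n]
    have h3 : ‖S‖ ≤ ‖g t‖ := by
      rw [h1, h2]; exact mul_le_mul_of_nonneg_left hTle (by positivity)
    linarith
  set y := (z2 - μ) • S with hy
  have hz2μ : ‖z2 - μ‖ = ε := by
    have h4 : z2 - μ = (((t / ρ - 1 : ℝ)) : ℂ) * μ := by rw [hz2]; push_cast; ring
    rw [h4, norm_mul, Complex.norm_real, ← hρdef]
    have h1 : (0:ℝ) ≤ t / ρ - 1 := by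
      rw [sub_nonneg, le_div_iff₀ hρpos, one_mul]; exact htρ.le
    rw [Real.norm_of_nonneg h1, sub_mul, one_mul, div_mul_cancel₀ _ (ne_of_gt hρpos), ht]
    ring
  have hynorm : ‖y‖ < 1 := by
    rw [hy, norm_smul, hz2μ]
    have h1 : ε * ‖S‖ < ε * C := mul_lt_mul_of_pos_left hSnorm hε0
    have h2 : ε * C ≤ (1 / (2 * C)) * C := by
      exact mul_le_mul_of_nonneg_right (min_le_right _ _) hC0.le
    have h3 : (1 / (2 * C)) * C = 1 / 2 := by field_simp
    calc ε * ‖S‖ < ε * C := h1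
      _ ≤ 1/2 := by rw [← h3]; exact h2
      _ < 1 := by norm_num
  set a := μ • (1 : Matrix (Fin n) (Fin n) ℂ) - A with ha
  have hdecomp : a = (z2 • (1 : Matrix (Fin n) (Fin n) ℂ) - A) - (z2 - μ) • 1 := by
    rw [ha, sub_smul]; abel
  have haS : a * S = 1 - y := by
    rw [hdecomp, sub_mul, p2a, hy, smul_mul_assoc, one_mul]
  have hSa : S * a = 1 - y := by
    rw [hdecomp, mul_sub, p2b, hy, mul_smul_comm, mul_one]
  have hAT : Commute A T2 := p2c
  have hAS : Commute A S := hAT.smul_right _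
  have haS' : Commute a S := by
    have h1 : Commute (μ • (1 : Matrix (Fin n) (Fin n) ℂ)) S := (Commute.one_left S).smul_left μ
    exact h1.sub_left hAS
  have hay : Commute a y := haS'.smul_right _
  have hav : Commute a (1 - y) := (Commute.one_right a).sub_right hay
  set v : (Matrix (Fin n) (Fin n) ℂ)ˣ := Units.oneSub y hynorm with hv
  have hvval : (v : Matrix (Fin n) (Fin n) ℂ) = 1 - y := rfl
  have hav2 : Commute a ((v : (Matrix (Fin n) (Fin n) ℂ)ˣ) : Matrix (Fin n) (Fin n) ℂ) := by
    rw [hvval]; exact hav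
  have hav' : Commute a ((v⁻¹ : (Matrix (Fin n) (Fin n) ℂ)ˣ) : Matrix (Fin n) (Fin n) ℂ) :=
    hav2.units_inv_right
  have hisunit : IsUnit a := by
    refine ⟨⟨a, S * ((v⁻¹ : (Matrix (Fin n) (Fin n) ℂ)ˣ) : Matrix (Fin n) (Fin n) ℂ),
      ?_, ?_⟩, rfl⟩
    · rw [← mul_assoc, haS, ← hvval, Units.mul_inv]
    · rw [mul_assoc, ← hav'.eq, ← mul_assoc, hSa, ← hvval, Units.mul_inv]
  have hnotunit := spectrum.mem_iff.mp hμ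
  rw [Algebra.algebraMap_eq_smul_one] at hnotunit
  exact hnotunit (ha ▸ hisunit)

lemma main {n : ℕ} (hn : 0 < n)
    (M : Matrix (Fin n) (Fin n) ℝ) (hM : ∀ i j, 0 ≤ M i j) :
    ∃ lam : ℝ, 0 ≤ lam ∧
      (lam : ℂ) ∈ spectrum ℂ (M.map (Complex.ofReal)) ∧
      ∀ μ ∈ spectrum ℂ (M.map (Complex.ofReal)), ‖μ‖ ≤ lam := by
  haveI : Nonempty (Fin n) := ⟨⟨0, hn⟩⟩
  set A := M.map (Complex.ofReal) with hA
  have hMpow : ∀ (k : ℕ) (i j : Fin n), 0 ≤ (M ^ k) i j := by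
    intro k
    induction k with
    | zero => intro i j; by_cases h : i = j <;> simp [Matrix.one_apply, h]
    | succ k ih =>
      intro i j
      rw [pow_succ, Matrix.mul_apply]
      exact Finset.sum_nonneg fun l _ => mul_nonneg (ih i l) (hM l j)
  have hApow : ∀ k : ℕ, A ^ k = (M ^ k).map Complex.ofReal := by
    intro k
    have h1 : A = Complex.ofRealHom.mapMatrix M := by
      ext i j; rfl
    rw [h1, ← map_pow, RingHom.mapMatrix_apply]
    rfl
  have hpos : ∀ (k : ℕ) (i j : Fin n), ∃ r : ℝ, 0 ≤ r ∧ (A ^ k) i j = (r : ℂ) := by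
    intro k i j
    exact ⟨(M ^ k) i j, hMpow k i j, by rw [hApow k]; rfl⟩
  obtain ⟨μ, hμ, hμr⟩ := spectrum.exists_nnnorm_eq_spectralRadius A
  have hmax : ∀ ν ∈ spectrum ℂ A, ‖ν‖ ≤ ‖μ‖ := by
    intro ν hν
    have h1 : (‖ν‖₊ : ℝ≥0∞) ≤ spectralRadius ℂ A :=
      le_iSup₂ (f := fun k (_ : k ∈ spectrum ℂ A) => (‖k‖₊ : ℝ≥0∞)) ν hν
    rw [← hμr] at h1
    have h2 : ‖ν‖₊ ≤ ‖μ‖₊ := by exact_mod_cast h1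
    rw [← coe_nnnorm ν, ← coe_nnnorm μ]
    exact_mod_cast h2
  exact ⟨‖μ‖, norm_nonneg μ, crux A hpos hμ hmax, hmax⟩

end PerronAux

/-- every square matrix with nonnegative real entries has a real
nonnegative eigenvalue `λ` equal to its spectral radius (the Perron–Frobenius
leading eigenvalue): `λ` is an eigenvalue of `M` (i.e. belongs to the spectrum
of `M` viewed as a complex matrix), `λ ≥ 0`, and every complex eigenvalue `μ`
satisfies `‖μ‖ ≤ λ`. -/
theorem nonneg_matrix_has_perron_eigenvalue {n : ℕ} (hn : 0 < n)
    (M : Matrix (Fin n) (Fin n) ℝ) (hM : ∀ i j, 0 ≤ M i j) :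
    ∃ lam : ℝ, 0 ≤ lam ∧
      (lam : ℂ) ∈ spectrum ℂ (M.map (Complex.ofReal)) ∧
      ∀ μ ∈ spectrum ℂ (M.map (Complex.ofReal)), ‖μ‖ ≤ lam :=
  PerronAux.main hn M hM
end
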